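/- Let n ≥ 2 and γ > 0, and let (M_N)_{N∈ℕ, N≥1} be a family of independent random variables where M_N has the Poisson distribution of parameter γ · 2^n · ((N+1)^n − N^n). Then there exists a constant c > 0, depending only on γ and n, such that almost surely there is a (random) N̄ ∈ ℕ with: M_N ≤ c · N^{n−1} for every integer N ≥ N̄. -/

import Mathlib

open MeasureTheory ProbabilityTheory Real Filter
open scoped ENNReal

lemma aux_pow (n N : ℕ) : (N + 1) ^ n ≤ N ^ n + n * (N + 1) ^ (n - 1) := by
  induction n with
  | zero => simp
  | succ m ih =>
    rcases Nat.eq_zero_or_pos m with hm | hm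
    · subst hm; simp
    calc (N + 1) ^ (m + 1) = (N + 1) * (N + 1) ^ m := by ring
      _ ≤ (N + 1) * (N ^ m + m * (N + 1) ^ (m - 1)) := Nat.mul_le_mul_left _ ih
      _ = (N + 1) * N ^ m + m * ((N + 1) * (N + 1) ^ (m - 1)) := by ring
      _ = (N + 1) * N ^ m + m * (N + 1) ^ m := by
          congr 2
          rw [← pow_succ']
          congr 1
          omega
      _ = N ^ (m + 1) + N ^ m + m * (N + 1) ^ m := by ring
      _ ≤ N ^ (m + 1) + (N + 1) ^ m + m * (N + 1) ^ m := by
          have := Nat.pow_le_pow_left (show N ≤ N + 1 by omega) m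
          omega
      _ = N ^ (m + 1) + (m + 1) * (N + 1) ^ ((m + 1) - 1) := by
          rw [Nat.add_sub_cancel]; ring

lemma aux_crown (n N : ℕ) (hN : 1 ≤ N) :
    ((N + 1) ^ n - N ^ n : ℕ) ≤ n * 2 ^ (n - 1) * N ^ (n - 1) := by
  have h1 := aux_pow n N
  have h2 : (N + 1) ^ (n - 1) ≤ (2 * N) ^ (n - 1) := Nat.pow_le_pow_left (by omega) _
  calc (N + 1) ^ n - N ^ n ≤ n * (N + 1) ^ (n - 1) := by omega
    _ ≤ n * (2 * N) ^ (n - 1) := Nat.mul_le_mul_left _ h2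
    _ = n * 2 ^ (n - 1) * N ^ (n - 1) := by rw [mul_pow, mul_assoc]

lemma aux_tail (r : NNReal) (t : ℕ) :
    poissonMeasure r {k | t ≤ k} ≤ ENNReal.ofReal (Real.exp r / 2 ^ t) := by
  have key : ∀ k : ℕ, Real.exp r * poissonPMFReal (2 * r) k
      = (2 : ℝ) ^ k * poissonPMFReal r k := by
    intro k
    unfold poissonPMFReal
    push_cast
    rw [mul_pow, ← mul_div_assoc, ← mul_div_assoc, ← mul_assoc, ← Real.exp_add]
    ring_nf
  have hS : HasSum (fun k : ℕ => (2 : ℝ) ^ k * poissonPMFReal r k) (Real.exp r) := by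
    have h : HasSum (fun k : ℕ => Real.exp r * poissonPMFReal (2 * r) k) (Real.exp r * 1) :=
      (poissonPMFRealSum (2 * r)).mul_left (Real.exp r)
    simp only [key, mul_one] at h
    exact h
  have hnn : ∀ k : ℕ, 0 ≤ (2 : ℝ) ^ k * poissonPMFReal r k / 2 ^ t := fun k => by
    have := poissonPMFReal_nonneg (r := r) (n := k)
    positivity
  have hPM : poissonMeasure r {k | t ≤ k} = ∑' k, Set.indicator {k | t ≤ k} (⇑(poissonPMF r)) k := by
    rw [poissonMeasure, Measure.sum_apply _ MeasurableSet.of_discrete]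
    congr 1; ext k
    by_cases hk : t ≤ k <;> simp [hk, ← poissonPMFReal_ofReal_eq_poissonPMF, poissonPMFReal]
  rw [hPM]
  calc ∑' k, Set.indicator {k | t ≤ k} (⇑(poissonPMF r)) k
      ≤ ∑' k : ℕ, ENNReal.ofReal ((2 : ℝ) ^ k * poissonPMFReal r k / 2 ^ t) := by
        apply ENNReal.tsum_le_tsum
        intro k
        by_cases hk : k ∈ {k : ℕ | t ≤ k}
        · rw [Set.indicator_of_mem hk]
          show ENNReal.ofReal (poissonPMFReal r k) ≤ _
          apply ENNReal.ofReal_le_ofReal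
          have h1 : (1 : ℝ) ≤ 2 ^ k / 2 ^ t :=
            (one_le_div (by positivity)).mpr (pow_le_pow_right₀ one_le_two hk)
          have h0 := poissonPMFReal_nonneg (r := r) (n := k)
          calc poissonPMFReal r k = poissonPMFReal r k * 1 := (mul_one _).symm
            _ ≤ poissonPMFReal r k * (2 ^ k / 2 ^ t) := by
                exact mul_le_mul_of_nonneg_left h1 h0
            _ = (2 : ℝ) ^ k * poissonPMFReal r k / 2 ^ t := by ring
        · rw [Set.indicator_of_notMem hk]; exact zero_le
    _ = ENNReal.ofReal (∑' k : ℕ, (2 : ℝ) ^ k * poissonPMFReal r k / 2 ^ t) :=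
        (ENNReal.ofReal_tsum_of_nonneg hnn (hS.summable.div_const _)).symm
    _ = ENNReal.ofReal (Real.exp r / 2 ^ t) := by rw [(hS.div_const _).tsum_eq]


/-- Claim (i) in the proof of Lemma 2.4: if `(M_N)_{N ≥ 1}` are independent random
variables with `M_N` Poisson-distributed with parameter `γ · 2^n · ((N+1)^n − N^n)`
(the mean number of points of a Poisson point process of intensity `γ` in the square
crown `C_N = B_{N+1} \ B_N`, `B_r = [−r,r]^n`), then there is a constant `c > 0`
depending only on `γ` and `n` such that almost surely `M_N ≤ c N^{n−1}` for all large
enough `N`. -/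
theorem stmt_11 (n : ℕ) (hn : 2 ≤ n) (γ : NNReal) (hγ : 0 < γ)
    {Ω : Type*} [MeasureSpace Ω] [IsProbabilityMeasure (ℙ : Measure Ω)]
    (M : ℕ → Ω → ℕ) (hmeas : ∀ N, Measurable (M N))
    (hindep : iIndepFun (fun N : {k : ℕ // 1 ≤ k} => M (N : ℕ)) ℙ)
    (hdist : ∀ N : ℕ, 1 ≤ N →
      Measure.map (M N) ℙ =
        poissonMeasure (γ * 2 ^ n * (((N + 1) ^ n - N ^ n : ℕ) : NNReal))) :
    ∃ c : ℝ, 0 < c ∧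
      ∀ᵐ ω ∂ℙ, ∃ N₀ : ℕ, ∀ N : ℕ, N₀ ≤ N →
        (M N ω : ℝ) ≤ c * (N : ℝ) ^ (n - 1) := by
  set K : ℝ := (γ : ℝ) * 2 ^ n * (n * 2 ^ (n - 1)) with hKdef
  have hK0 : 0 ≤ K := by positivity
  have hlog2 : 0 < Real.log 2 := Real.log_pos one_lt_two
  set c : ℝ := (K + 1) / Real.log 2 with hcdef
  have hc : 0 < c := by positivity
  have hclog : c * Real.log 2 = K + 1 := div_mul_cancel₀ _ hlog2.ne'
  set s : ℕ → Set Ω := fun N => {ω | 1 ≤ N ∧ ⌈c * (N : ℝ) ^ (n - 1)⌉₊ ≤ M N ω} with hsdef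
  -- probability bound
  have hbound : ∀ N : ℕ, ℙ (s N) ≤ ENNReal.ofReal (Real.exp (-(N : ℝ))) := by
    intro N
    rcases Nat.eq_zero_or_pos N with h0 | hN1
    · subst h0
      have : s 0 = ∅ := by ext ω; simp [hsdef]
      rw [this]; simp
    · set t : ℕ := ⌈c * (N : ℝ) ^ (n - 1)⌉₊ with htdef
      set y : ℝ := (N : ℝ) ^ (n - 1) with hydef
      have hy1 : (N : ℝ) ≤ y := by
        apply le_self_pow₀
        · exact_mod_cast hN1
        · omega
      have hy0 : (0 : ℝ) ≤ y := le_trans (by positivity) hy1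
      have hseq : s N = M N ⁻¹' {k | t ≤ k} := by
        ext ω
        simp only [hsdef, Set.mem_setOf_eq, Set.mem_preimage]
        exact and_iff_right hN1
      rw [hseq, ← Measure.map_apply (hmeas N) MeasurableSet.of_discrete, hdist N hN1]
      refine le_trans (aux_tail _ t) (ENNReal.ofReal_le_ofReal ?_)
      set r : NNReal := γ * 2 ^ n * (((N + 1) ^ n - N ^ n : ℕ) : NNReal) with hrdef
      have hr : (r : ℝ) ≤ K * y := by
        have h1 := aux_crown n N hN1
        have h1' : (((N + 1) ^ n - N ^ n : ℕ) : ℝ) ≤ (n : ℝ) * 2 ^ (n - 1) * (N : ℝ) ^ (n - 1) := by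
          exact_mod_cast h1
        have hcoe : (r : ℝ) = (γ : ℝ) * 2 ^ n * (((N + 1) ^ n - N ^ n : ℕ) : ℝ) := by
          rw [hrdef]; norm_cast
        have hmul := mul_le_mul_of_nonneg_left h1'
          (show (0 : ℝ) ≤ (γ : ℝ) * 2 ^ n by positivity)
        calc (r : ℝ) = (γ : ℝ) * 2 ^ n * (((N + 1) ^ n - N ^ n : ℕ) : ℝ) := hcoe
          _ ≤ (γ : ℝ) * 2 ^ n * ((n : ℝ) * 2 ^ (n - 1) * (N : ℝ) ^ (n - 1)) := hmul
          _ = K * y := by rw [hKdef, hydef]; ring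
      have hden : Real.exp (c * y * Real.log 2) ≤ 2 ^ t := by
        have h2t : (2 : ℝ) ^ t = Real.exp ((t : ℝ) * Real.log 2) := by
          rw [Real.exp_nat_mul, Real.exp_log two_pos]
        rw [h2t]
        apply Real.exp_le_exp.mpr
        exact mul_le_mul_of_nonneg_right (Nat.le_ceil _) hlog2.le
      calc Real.exp r / 2 ^ t ≤ Real.exp (K * y) / Real.exp (c * y * Real.log 2) :=
            div_le_div₀ (Real.exp_pos _).le (Real.exp_le_exp.mpr hr) (Real.exp_pos _) hden
        _ = Real.exp (K * y - c * y * Real.log 2) := (Real.exp_sub _ _).symm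
        _ = Real.exp (-y) := by
            congr 1
            have : c * y * Real.log 2 = (K + 1) * y := by rw [mul_right_comm, hclog]
            rw [this]; ring
        _ ≤ Real.exp (-(N : ℝ)) := Real.exp_le_exp.mpr (by linarith)
  -- summability
  have hgeom : Summable (fun N : ℕ => Real.exp (-(N : ℝ))) := by
    have : (fun N : ℕ => Real.exp (-(N : ℝ))) = fun N : ℕ => Real.exp (-1) ^ N := by
      funext N
      rw [← Real.exp_nat_mul]
      congr 1; ring
    rw [this]
    exact summable_geometric_of_lt_one (Real.exp_pos _).le
      (Real.exp_lt_one_iff.mpr (by norm_num))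
  have hsum : (∑' N : ℕ, ℙ (s N)) ≠ ∞ := by
    have h1 : (∑' N : ℕ, ℙ (s N)) ≤ ∑' N : ℕ, ENNReal.ofReal (Real.exp (-(N : ℝ))) :=
      ENNReal.tsum_le_tsum hbound
    have h2 : (∑' N : ℕ, ENNReal.ofReal (Real.exp (-(N : ℝ))))
        = ENNReal.ofReal (∑' N : ℕ, Real.exp (-(N : ℝ))) :=
      (ENNReal.ofReal_tsum_of_nonneg (fun N => (Real.exp_pos _).le) hgeom).symm
    rw [h2] at h1
    exact (lt_of_le_of_lt h1 ENNReal.ofReal_lt_top).ne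
  have h0 : ℙ {ω | ∃ᶠ N in atTop, ω ∈ s N} = 0 :=
    measure_setOf_frequently_eq_zero hsum
  refine ⟨c, hc, ?_⟩
  have h1 : ∀ᵐ ω ∂ℙ, ¬ ∃ᶠ N in atTop, ω ∈ s N := by
    rw [ae_iff]; simpa only [not_not] using h0
  filter_upwards [h1] with ω hω
  rw [Filter.not_frequently] at hω
  rw [Filter.eventually_atTop] at hω
  obtain ⟨N₁, hN₁⟩ := hω
  refine ⟨max N₁ 1, fun N hN => ?_⟩
  have hNN1 : 1 ≤ N := le_trans (le_max_right _ _) hN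
  have hns := hN₁ N (le_trans (le_max_left _ _) hN)
  simp only [hsdef, Set.mem_setOf_eq, not_and, not_le] at hns
  have := hns hNN1
  exact (Nat.lt_ceil.mp this).le
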